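/- Let G be a weighted graph on N vertices with combinatorial Laplacian L, E_F a contracted matching of G with associated averaging projection Π_F, and let x ∈ ℝ^N be a unit eigenvector of L with eigenvalue λ (L x = λ x, ‖x‖₂ = 1). Then xᵀ Π_F L Π_F x − λ = (1/4) Σ_{{i,j} ∈ E_F} (x(i) − x(j))² (d_i + d_j + 2 W(i,j) − 4λ). -/
import Mathlib


open Matrix

/-- The combinatorial Laplacian `L = D - W`. -/
def lap {N : ℕ} (W : Matrix (Fin N) (Fin N) ℝ) : Matrix (Fin N) (Fin N) ℝ :=
  Matrix.diagonal (fun i => ∑ j, W i j) - W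

/-- `W` is the weight matrix of a weighted graph: symmetric, nonnegative, zero diagonal. -/
def IsWeightedGraph {N : ℕ} (W : Matrix (Fin N) (Fin N) ℝ) : Prop :=
  (∀ i j, W i j = W j i) ∧ (∀ i j, 0 ≤ W i j) ∧ (∀ i, W i i = 0)

/-- A contracted matching of the weighted graph given by `W`: a finite set of edges
(each recorded once, as an ordered pair `(i,j)` with `W i j > 0` and `i ≠ j`) such that for any
two distinct edges `{i,j}`, `{p,q}` all of `W i p`, `W i q`, `W j p`, `W j q` vanish
(in particular the edges are vertex-disjoint, and no vertex of one edge is adjacent to a vertex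
of another one). -/
def IsContractedMatching {N : ℕ} (W : Matrix (Fin N) (Fin N) ℝ)
    (EF : Finset (Fin N × Fin N)) : Prop :=
  (∀ e ∈ EF, e.1 ≠ e.2 ∧ 0 < W e.1 e.2) ∧
  (∀ e ∈ EF, ∀ e' ∈ EF, e ≠ e' →
    W e.1 e'.1 = 0 ∧ W e.1 e'.2 = 0 ∧ W e.2 e'.1 = 0 ∧ W e.2 e'.2 = 0)

open scoped Classical in
/-- The averaging projection `Π_F` associated with a (vertex-disjoint) set of edges `E_F`:
`(Π_F x)(i) = (Π_F x)(j) = (x(i)+x(j))/2` for every `{i,j} ∈ E_F`, and `(Π_F x)(ℓ) = x(ℓ)` for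
every vertex `ℓ` not incident to an edge of `E_F`. -/
noncomputable def avgProj {N : ℕ} (EF : Finset (Fin N × Fin N)) :
    Matrix (Fin N) (Fin N) ℝ :=
  Matrix.of fun a b =>
    if a = b then (if ∃ e ∈ EF, a = e.1 ∨ a = e.2 then (1 : ℝ) / 2 else 1)
    else if (a, b) ∈ EF ∨ (b, a) ∈ EF then 1 / 2 else 0

noncomputable def esgn {N : ℕ} (e : Fin N × Fin N) (a : Fin N) : ℝ :=
  (if a = e.1 then (-1:ℝ) else 0) + (if a = e.2 then (1:ℝ) else 0)

noncomputable def yvec {N : ℕ} (EF : Finset (Fin N × Fin N)) (x : Fin N → ℝ) : Fin N → ℝ :=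
  fun a => ∑ e ∈ EF, ((x e.1 - x e.2) / 2) * esgn e a

lemma esgn_eq_zero {N : ℕ} {e : Fin N × Fin N} {a : Fin N} (h1 : a ≠ e.1) (h2 : a ≠ e.2) :
    esgn e a = 0 := by simp [esgn, h1, h2]

-- vertex disjointness of distinct edges
lemma vert_disjoint {N : ℕ} {W : Matrix (Fin N) (Fin N) ℝ}
    (hW : IsWeightedGraph W) {EF : Finset (Fin N × Fin N)}
    (hEF : IsContractedMatching W EF) :
    ∀ e ∈ EF, ∀ e' ∈ EF, e ≠ e' →
      e.1 ≠ e'.1 ∧ e.1 ≠ e'.2 ∧ e.2 ≠ e'.1 ∧ e.2 ≠ e'.2 := by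
  obtain ⟨hsym, -, -⟩ := hW
  obtain ⟨hedge, hdisj⟩ := hEF
  intro e he e' he' hne
  obtain ⟨h1, h2, h3, h4⟩ := hdisj e he e' he' hne
  have hpos := (hedge e' he').2
  refine ⟨?_, ?_, ?_, ?_⟩ <;> intro h
  · rw [h] at h2; rw [h2] at hpos; exact lt_irrefl 0 hpos
  · rw [h, hsym e'.2 e'.1] at h1; rw [h1] at hpos; exact lt_irrefl 0 hpos
  · rw [h] at h4; rw [h4] at hpos; exact lt_irrefl 0 hpos
  · rw [h, hsym e'.2 e'.1] at h3; rw [h3] at hpos; exact lt_irrefl 0 hpos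

lemma avgProj_mulVec {N : ℕ} {W : Matrix (Fin N) (Fin N) ℝ}
    (hW : IsWeightedGraph W) {EF : Finset (Fin N × Fin N)}
    (hEF : IsContractedMatching W EF) (x : Fin N → ℝ) :
    avgProj EF *ᵥ x = x + yvec EF x := by
  classical
  have hvert := vert_disjoint hW hEF
  obtain ⟨hedge, hdisj⟩ := hEF
  funext a
  show ∑ b, avgProj EF a b * x b = x a + yvec EF x a
  by_cases hinc : ∃ e ∈ EF, a = e.1 ∨ a = e.2
  · obtain ⟨e, he, hae⟩ := hinc
    have hne12 : e.1 ≠ e.2 := (hedge e he).1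
    have hemem : (e.1, e.2) ∈ EF := by rwa [Prod.mk.eta]
    have hc' : ∃ e' ∈ EF, a = e'.1 ∨ a = e'.2 := ⟨e, he, hae⟩
    rcases hae with hae | hae
    · have hy : yvec EF x a = ((x e.1 - x e.2) / 2) * esgn e a := by
        apply Finset.sum_eq_single_of_mem e he
        intro e' he' hne'
        have hv := hvert e he e' he' (fun h => hne' h.symm)
        rw [esgn_eq_zero (fun h => hv.1 (hae.symm.trans h))
          (fun h => hv.2.1 (hae.symm.trans h)), mul_zero]
      have key : ∀ b, avgProj EF a b * x b
          = (if b = a then x a / 2 else 0) + (if b = e.2 then x e.2 / 2 else 0) := by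
        intro b
        by_cases hb1 : b = a
        · have hb2 : ¬ b = e.2 := fun h => hne12 ((hb1.trans hae).symm.trans h)
          simp only [avgProj, Matrix.of_apply]
          rw [if_pos hb1.symm, if_pos hc', if_pos hb1, if_neg hb2, hb1]
          ring
        · by_cases hb2 : b = e.2
          · simp only [avgProj, Matrix.of_apply]
            rw [if_neg (fun h => hb1 h.symm),
              if_pos (Or.inl (show (a, b) ∈ EF by rw [hae, hb2]; exact hemem)),
              if_neg hb1, if_pos hb2, hb2]
            ring
          · have hz : avgProj EF a b = 0 := by
              simp only [avgProj, Matrix.of_apply]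
              rw [if_neg (fun h => hb1 h.symm), if_neg ?_]
              rintro (hmem | hmem)
              · have hne' : (a, b) ≠ e := fun h => hb2 (congrArg Prod.snd h)
                exact (hvert _ hmem e he hne').1 hae
              · have hne' : (b, a) ≠ e :=
                  fun h => hb1 ((congrArg Prod.fst h).trans hae.symm)
                exact (hvert _ hmem e he hne').2.2.1 hae
            rw [hz, zero_mul, if_neg hb1, if_neg hb2, add_zero]
      rw [Finset.sum_congr rfl (fun b _ => key b), Finset.sum_add_distrib,
        Finset.sum_ite_eq' Finset.univ a (fun _ => x a / 2),
        Finset.sum_ite_eq' Finset.univ e.2 (fun _ => x e.2 / 2)]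
      simp only [Finset.mem_univ, ite_true]
      rw [hy]
      have hs : esgn e a = -1 := by rw [hae]; simp [esgn, hne12]
      rw [hs, hae]
      ring
    · have hy : yvec EF x a = ((x e.1 - x e.2) / 2) * esgn e a := by
        apply Finset.sum_eq_single_of_mem e he
        intro e' he' hne'
        have hv := hvert e he e' he' (fun h => hne' h.symm)
        rw [esgn_eq_zero (fun h => hv.2.2.1 (hae.symm.trans h))
          (fun h => hv.2.2.2 (hae.symm.trans h)), mul_zero]
      have key : ∀ b, avgProj EF a b * x b
          = (if b = e.1 then x e.1 / 2 else 0) + (if b = a then x a / 2 else 0) := by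
        intro b
        by_cases hb2 : b = a
        · have hb1 : ¬ b = e.1 := fun h => hne12 (h.symm.trans (hb2.trans hae))
          simp only [avgProj, Matrix.of_apply]
          rw [if_pos hb2.symm, if_pos hc', if_neg hb1, if_pos hb2, hb2]
          ring
        · by_cases hb1 : b = e.1
          · simp only [avgProj, Matrix.of_apply]
            rw [if_neg (fun h => hb2 h.symm),
              if_pos (Or.inr (show (b, a) ∈ EF by rw [hb1, hae]; exact hemem)),
              if_pos hb1, if_neg hb2, hb1]
            ring
          · have hz : avgProj EF a b = 0 := by
              simp only [avgProj, Matrix.of_apply]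
              rw [if_neg (fun h => hb2 h.symm), if_neg ?_]
              rintro (hmem | hmem)
              · have hne' : (a, b) ≠ e :=
                  fun h => hb2 ((congrArg Prod.snd h).trans hae.symm)
                exact (hvert _ hmem e he hne').2.1 hae
              · have hne' : (b, a) ≠ e := fun h => hb1 (congrArg Prod.fst h)
                exact (hvert _ hmem e he hne').2.2.2 hae
            rw [hz, zero_mul, if_neg hb1, if_neg hb2, add_zero]
      rw [Finset.sum_congr rfl (fun b _ => key b), Finset.sum_add_distrib,
        Finset.sum_ite_eq' Finset.univ e.1 (fun _ => x e.1 / 2),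
        Finset.sum_ite_eq' Finset.univ a (fun _ => x a / 2)]
      simp only [Finset.mem_univ, ite_true]
      rw [hy]
      have hs : esgn e a = 1 := by rw [hae]; simp [esgn, Ne.symm hne12]
      rw [hs, hae]
      ring
  · have hy0 : yvec EF x a = 0 := by
      apply Finset.sum_eq_zero
      intro e he
      rw [esgn_eq_zero (fun h => hinc ⟨e, he, Or.inl h⟩) (fun h => hinc ⟨e, he, Or.inr h⟩),
        mul_zero]
    have key : ∀ b, avgProj EF a b * x b = if b = a then x a else 0 := by
      intro b
      by_cases hb : b = a
      · simp only [avgProj, Matrix.of_apply]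
        rw [if_pos hb.symm, if_neg hinc, one_mul, if_pos hb, hb]
      · have hz : avgProj EF a b = 0 := by
          simp only [avgProj, Matrix.of_apply]
          rw [if_neg (fun h => hb h.symm), if_neg ?_]
          rintro (hmem | hmem)
          · exact hinc ⟨(a, b), hmem, Or.inl rfl⟩
          · exact hinc ⟨(b, a), hmem, Or.inr rfl⟩
        rw [hz, zero_mul, if_neg hb]
    rw [Finset.sum_congr rfl (fun b _ => key b),
      Finset.sum_ite_eq' Finset.univ a (fun _ => x a)]
    simp [hy0]

lemma esgn_sum {N : ℕ} (e : Fin N × Fin N) (f : Fin N → ℝ) :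
    ∑ a, esgn e a * f a = f e.2 - f e.1 := by
  simp [esgn, add_mul, Finset.sum_add_distrib, ite_mul, Finset.sum_ite_eq']
  ring

lemma esgn_sq_sum {N : ℕ} {e : Fin N × Fin N} (hne : e.1 ≠ e.2) (f : Fin N → ℝ) :
    ∑ a, f a * (esgn e a * esgn e a) = f e.1 + f e.2 := by
  have h : ∀ a, f a * (esgn e a * esgn e a)
      = (if a = e.1 then f a else 0) + (if a = e.2 then f a else 0) := by
    intro a
    by_cases h1 : a = e.1
    · subst h1; simp [esgn, hne]
    · by_cases h2 : a = e.2
      · subst h2; simp [esgn, h1]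
      · simp [esgn, h1, h2]
  simp [h, Finset.sum_add_distrib, Finset.sum_ite_eq']

lemma dot_yvec {N : ℕ} (EF : Finset (Fin N × Fin N)) (x : Fin N → ℝ) :
    x ⬝ᵥ yvec EF x = ∑ e ∈ EF, (-((x e.1 - x e.2) ^ 2 / 2)) := by
  simp only [dotProduct]
  calc ∑ a, x a * yvec EF x a
      = ∑ a, ∑ e ∈ EF, ((x e.1 - x e.2) / 2) * (esgn e a * x a) := by
        apply Finset.sum_congr rfl
        intro a _
        show x a * ∑ e ∈ EF, ((x e.1 - x e.2) / 2) * esgn e a = _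
        rw [Finset.mul_sum]
        apply Finset.sum_congr rfl
        intro e _
        ring
    _ = ∑ e ∈ EF, ∑ a, ((x e.1 - x e.2) / 2) * (esgn e a * x a) := Finset.sum_comm
    _ = ∑ e ∈ EF, (-((x e.1 - x e.2) ^ 2 / 2)) := by
        apply Finset.sum_congr rfl
        intro e _
        rw [← Finset.mul_sum, esgn_sum e x]
        ring

lemma yvec_quadform {N : ℕ} {W : Matrix (Fin N) (Fin N) ℝ}
    (hW : IsWeightedGraph W) {EF : Finset (Fin N × Fin N)}
    (hEF : IsContractedMatching W EF) (x : Fin N → ℝ) :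
    yvec EF x ⬝ᵥ (lap W *ᵥ yvec EF x)
      = ∑ e ∈ EF, ((x e.1 - x e.2) ^ 2 / 4) *
          ((∑ ℓ, W e.1 ℓ) + (∑ ℓ, W e.2 ℓ) + 2 * W e.1 e.2) := by
  classical
  have hvert := vert_disjoint hW hEF
  obtain ⟨hsym, hnn, hdiag⟩ := hW
  obtain ⟨hedge, hdisj⟩ := hEF
  set y := yvec EF x with hydef
  have hyapp : ∀ a, y a = ∑ e ∈ EF, ((x e.1 - x e.2) / 2) * esgn e a := fun a => rfl
  have horth : ∀ e ∈ EF, ∀ e' ∈ EF, e ≠ e' → ∀ a, esgn e a * esgn e' a = 0 := by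
    intro e he e' he' hne a
    have hv := hvert e he e' he' hne
    by_cases h1 : a = e.1
    · rw [esgn_eq_zero (e := e') (fun h => hv.1 (h1.symm.trans h))
        (fun h => hv.2.1 (h1.symm.trans h)), mul_zero]
    · by_cases h2 : a = e.2
      · rw [esgn_eq_zero (e := e') (fun h => hv.2.2.1 (h2.symm.trans h))
          (fun h => hv.2.2.2 (h2.symm.trans h)), mul_zero]
      · rw [esgn_eq_zero h1 h2, zero_mul]
  have hLy : ∀ a, (lap W *ᵥ y) a = (∑ b, W a b) * y a - ∑ b, W a b * y b := by
    intro a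
    simp [lap, Matrix.sub_mulVec, Matrix.mulVec, dotProduct, Matrix.sub_apply,
      sub_mul, Finset.sum_sub_distrib, Matrix.diagonal_apply, ite_mul,
      Finset.sum_ite_eq, Finset.sum_ite_eq']
  have hdot : y ⬝ᵥ (lap W *ᵥ y)
      = (∑ a, (∑ b, W a b) * (y a * y a)) - ∑ a, y a * (∑ b, W a b * y b) := by
    simp only [dotProduct]
    rw [← Finset.sum_sub_distrib]
    apply Finset.sum_congr rfl
    intro a _
    rw [hLy a]
    ring
  have hsq : ∀ a, y a * y a
      = ∑ e ∈ EF, ((x e.1 - x e.2) / 2 * ((x e.1 - x e.2) / 2)) * (esgn e a * esgn e a) := by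
    intro a
    rw [hyapp a, Finset.sum_mul_sum]
    apply Finset.sum_congr rfl
    intro e he
    have hz : ∀ e' ∈ EF, e' ≠ e →
        ((x e.1 - x e.2) / 2 * esgn e a) * ((x e'.1 - x e'.2) / 2 * esgn e' a) = 0 := by
      intro e' he' hne'
      have h0 := horth e he e' he' (fun h => hne' h.symm) a
      calc ((x e.1 - x e.2) / 2 * esgn e a) * ((x e'.1 - x e'.2) / 2 * esgn e' a)
          = ((x e.1 - x e.2) / 2 * ((x e'.1 - x e'.2) / 2)) * (esgn e a * esgn e' a) := by
            ring
        _ = 0 := by rw [h0, mul_zero]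
    rw [Finset.sum_eq_single_of_mem e he hz]
    ring
  have hT1 : ∑ a, (∑ b, W a b) * (y a * y a)
      = ∑ e ∈ EF, ((x e.1 - x e.2) ^ 2 / 4) * ((∑ ℓ, W e.1 ℓ) + (∑ ℓ, W e.2 ℓ)) := by
    calc ∑ a, (∑ b, W a b) * (y a * y a)
        = ∑ a, ∑ e ∈ EF, ((x e.1 - x e.2) / 2 * ((x e.1 - x e.2) / 2)) *
            ((∑ b, W a b) * (esgn e a * esgn e a)) := by
          apply Finset.sum_congr rfl
          intro a _
          rw [hsq a, Finset.mul_sum]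
          apply Finset.sum_congr rfl
          intro e _
          ring
      _ = ∑ e ∈ EF, ∑ a, ((x e.1 - x e.2) / 2 * ((x e.1 - x e.2) / 2)) *
            ((∑ b, W a b) * (esgn e a * esgn e a)) := Finset.sum_comm
      _ = ∑ e ∈ EF, ((x e.1 - x e.2) ^ 2 / 4) * ((∑ ℓ, W e.1 ℓ) + (∑ ℓ, W e.2 ℓ)) := by
          apply Finset.sum_congr rfl
          intro e he
          rw [← Finset.mul_sum, esgn_sq_sum (hedge e he).1 (fun a => ∑ b, W a b)]
          ring
  have hinner : ∀ a, (∑ b, W a b * y b)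
      = ∑ e ∈ EF, ((x e.1 - x e.2) / 2) * (W a e.2 - W a e.1) := by
    intro a
    calc ∑ b, W a b * y b
        = ∑ b, ∑ e ∈ EF, ((x e.1 - x e.2) / 2) * (esgn e b * W a b) := by
          apply Finset.sum_congr rfl
          intro b _
          rw [hyapp b, Finset.mul_sum]
          apply Finset.sum_congr rfl
          intro e _
          ring
      _ = ∑ e ∈ EF, ∑ b, ((x e.1 - x e.2) / 2) * (esgn e b * W a b) := Finset.sum_comm
      _ = ∑ e ∈ EF, ((x e.1 - x e.2) / 2) * (W a e.2 - W a e.1) := by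
          apply Finset.sum_congr rfl
          intro e _
          rw [← Finset.mul_sum, esgn_sum e (fun b => W a b)]
  have hT2 : ∑ a, y a * (∑ b, W a b * y b)
      = ∑ e ∈ EF, ((x e.1 - x e.2) ^ 2 / 4) * (-2 * W e.1 e.2) := by
    calc ∑ a, y a * (∑ b, W a b * y b)
        = ∑ a, ∑ e' ∈ EF, ∑ e ∈ EF, (((x e'.1 - x e'.2) / 2) * ((x e.1 - x e.2) / 2)) *
            (esgn e' a * (W a e.2 - W a e.1)) := by
          apply Finset.sum_congr rfl
          intro a _
          rw [hyapp a, hinner a, Finset.sum_mul_sum]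
          apply Finset.sum_congr rfl
          intro e' _
          apply Finset.sum_congr rfl
          intro e _
          ring
      _ = ∑ e' ∈ EF, ∑ e ∈ EF, ∑ a, (((x e'.1 - x e'.2) / 2) * ((x e.1 - x e.2) / 2)) *
            (esgn e' a * (W a e.2 - W a e.1)) := by
          rw [Finset.sum_comm]
          apply Finset.sum_congr rfl
          intro e' _
          exact Finset.sum_comm
      _ = ∑ e' ∈ EF, ((x e'.1 - x e'.2) ^ 2 / 4) * (-2 * W e'.1 e'.2) := by
          apply Finset.sum_congr rfl
          intro e' he'
          have hin : ∀ e ∈ EF,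
              (∑ a, (((x e'.1 - x e'.2) / 2) * ((x e.1 - x e.2) / 2)) *
                (esgn e' a * (W a e.2 - W a e.1)))
              = (((x e'.1 - x e'.2) / 2) * ((x e.1 - x e.2) / 2)) *
                  ((W e'.2 e.2 - W e'.2 e.1) - (W e'.1 e.2 - W e'.1 e.1)) := by
            intro e _
            rw [← Finset.mul_sum, esgn_sum e' (fun a => W a e.2 - W a e.1)]
          rw [Finset.sum_congr rfl hin]
          have hz : ∀ e ∈ EF, e ≠ e' →
              (((x e'.1 - x e'.2) / 2) * ((x e.1 - x e.2) / 2)) *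
                  ((W e'.2 e.2 - W e'.2 e.1) - (W e'.1 e.2 - W e'.1 e.1)) = 0 := by
            intro e he hne
            obtain ⟨g1, g2, g3, g4⟩ := hdisj e' he' e he (fun h => hne h.symm)
            rw [g1, g2, g3, g4]
            ring
          rw [Finset.sum_eq_single_of_mem e' he' hz]
          rw [hdiag e'.1, hdiag e'.2, hsym e'.2 e'.1]
          ring
  rw [hdot, hT1, hT2, ← Finset.sum_sub_distrib]
  apply Finset.sum_congr rfl
  intro e _
  ring

/-- for a contracted matching `E_F` with averaging projection `Π_F`, and a unit
eigenvector `x` of `L` with eigenvalue `λ`,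
`xᵀ Π_F L Π_F x − λ = (1/4) Σ_{{i,j} ∈ E_F} (x(i) − x(j))² (d_i + d_j + 2 W(i,j) − 4λ)`. -/
theorem avgProj_laplacian_quadform_eigvec {N : ℕ} (W : Matrix (Fin N) (Fin N) ℝ)
    (hW : IsWeightedGraph W) (EF : Finset (Fin N × Fin N))
    (hEF : IsContractedMatching W EF) (x : Fin N → ℝ) (lam : ℝ)
    (heig : lap W *ᵥ x = lam • x) (hunit : x ⬝ᵥ x = 1) :
    (avgProj EF *ᵥ x) ⬝ᵥ (lap W *ᵥ (avgProj EF *ᵥ x)) - lam =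
      (1 / 4) * ∑ e ∈ EF, (x e.1 - x e.2) ^ 2 *
        ((∑ ℓ, W e.1 ℓ) + (∑ ℓ, W e.2 ℓ) + 2 * W e.1 e.2 - 4 * lam) := by
  classical
  have hP : avgProj EF *ᵥ x = x + yvec EF x := avgProj_mulVec hW hEF x
  have hLT : (lap W)ᵀ = lap W := by
    simp only [lap, Matrix.transpose_sub, Matrix.diagonal_transpose]
    congr 1
    ext i j
    exact hW.1 j i
  have hxLy : x ⬝ᵥ (lap W *ᵥ yvec EF x) = lam * (x ⬝ᵥ yvec EF x) := by
    rw [Matrix.dotProduct_mulVec, ← Matrix.mulVec_transpose, hLT, heig,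
      smul_dotProduct, smul_eq_mul]
  have h2 : lam * (∑ e ∈ EF, -((x e.1 - x e.2) ^ 2 / 2)) +
        lam * (∑ e ∈ EF, -((x e.1 - x e.2) ^ 2 / 2)) +
        ∑ e ∈ EF, ((x e.1 - x e.2) ^ 2 / 4) *
          ((∑ ℓ, W e.1 ℓ) + (∑ ℓ, W e.2 ℓ) + 2 * W e.1 e.2)
      = (1 / 4) * ∑ e ∈ EF, (x e.1 - x e.2) ^ 2 *
          ((∑ ℓ, W e.1 ℓ) + (∑ ℓ, W e.2 ℓ) + 2 * W e.1 e.2 - 4 * lam) := by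
    rw [Finset.mul_sum, Finset.mul_sum, ← Finset.sum_add_distrib, ← Finset.sum_add_distrib]
    apply Finset.sum_congr rfl
    intro e _
    ring
  rw [hP, Matrix.mulVec_add, heig, add_dotProduct, dotProduct_add,
    dotProduct_add, dotProduct_smul, dotProduct_smul,
    smul_eq_mul, smul_eq_mul, hunit, hxLy, dotProduct_comm (yvec EF x) x,
    dot_yvec EF x, yvec_quadform hW hEF x]
  linear_combination h2
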